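/- For every Z > 0 and every C > 0 there exist λ₁ ≥ 1 and C₁ > 0, depending only on Z and C, such that for every λ ≥ λ₁ and every twice continuously differentiable function u : [0,Z] → ℝ with u(0) = 0 and u'(0) = 0, one has ∫₀^Z ( (1/2)·u''(z)² − C·u'(z)² ) e^{−2λz} dz ≥ C₁ e^{−2λZ} ∫₀^Z ( u''(z)² + u'(z)² + u(z)² ) dz. -/

import Mathlib

open intervalIntegral Real

/-- Weighted Poincaré-type inequality coming from the Carleman weight:
for `v` C¹ with `v 0 = 0` and `lam ≥ 1`,
`lam * ∫₀^Z v² e^{-2 lam z} ≤ ∫₀^Z (v')² e^{-2 lam z}`. -/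
lemma carleman_poincare (lam Z : ℝ) (hlam : 1 ≤ lam) (hZ : 0 ≤ Z)
    (v : ℝ → ℝ) (hv : ContDiff ℝ 1 v) (hv0 : v 0 = 0) :
    lam * ∫ z in (0:ℝ)..Z, (v z) ^ 2 * Real.exp (-2 * lam * z) ≤
      ∫ z in (0:ℝ)..Z, (deriv v z) ^ 2 * Real.exp (-2 * lam * z) := by
  have hvd : Differentiable ℝ v := hv.differentiable one_ne_zero
  have hv' : Continuous (deriv v) := hv.continuous_deriv le_rfl
  have hvc : Continuous v := hv.continuous
  have hE : Continuous fun z : ℝ => Real.exp (-2 * lam * z) := by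
    exact Real.continuous_exp.comp (continuous_const.mul continuous_id)
  -- derivative of h z = v z ^ 2 * exp(-2 lam z)
  have hderiv : ∀ z : ℝ, HasDerivAt (fun z => (v z) ^ 2 * Real.exp (-2 * lam * z))
      ((2 * v z * deriv v z) * Real.exp (-2 * lam * z)
        + (v z) ^ 2 * (-(2 * lam) * Real.exp (-2 * lam * z))) z := by
    intro z
    have h1 : HasDerivAt (fun z => (v z) ^ 2) (2 * v z * deriv v z) z := by
      have := ((hvd z).hasDerivAt).fun_pow 2
      simpa [mul_comm, mul_assoc, mul_left_comm] using this
    have h2 : HasDerivAt (fun z : ℝ => Real.exp (-2 * lam * z))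
        (-(2 * lam) * Real.exp (-2 * lam * z)) z := by
      have : HasDerivAt (fun z : ℝ => -2 * lam * z) (-2 * lam) z := by
        simpa using (hasDerivAt_id z).const_mul (-2 * lam)
      simpa [mul_comm] using this.exp
    simpa [mul_comm, mul_assoc, mul_left_comm] using h1.fun_mul h2
  have hintA : IntervalIntegrable
      (fun z => (2 * v z * deriv v z) * Real.exp (-2 * lam * z)) MeasureTheory.volume 0 Z :=
    (((continuous_const.mul hvc).mul hv').mul hE).intervalIntegrable 0 Z
  have hintB : IntervalIntegrable
      (fun z => (v z) ^ 2 * (-(2 * lam) * Real.exp (-2 * lam * z))) MeasureTheory.volume 0 Z :=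
    ((hvc.pow 2).mul (continuous_const.mul hE)).intervalIntegrable 0 Z
  have hintV : IntervalIntegrable
      (fun z => (v z) ^ 2 * Real.exp (-2 * lam * z)) MeasureTheory.volume 0 Z :=
    ((hvc.pow 2).mul hE).intervalIntegrable 0 Z
  have hintV' : IntervalIntegrable
      (fun z => (deriv v z) ^ 2 * Real.exp (-2 * lam * z)) MeasureTheory.volume 0 Z :=
    ((hv'.pow 2).mul hE).intervalIntegrable 0 Z
  have hFTC : (∫ z in (0:ℝ)..Z,
      ((2 * v z * deriv v z) * Real.exp (-2 * lam * z)
        + (v z) ^ 2 * (-(2 * lam) * Real.exp (-2 * lam * z))))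
      = (v Z) ^ 2 * Real.exp (-2 * lam * Z) - (v 0) ^ 2 * Real.exp (-2 * lam * 0) := by
    exact intervalIntegral.integral_eq_sub_of_hasDerivAt (fun z _ => hderiv z)
      (hintA.add hintB)
  have hsplit : (∫ z in (0:ℝ)..Z,
      ((2 * v z * deriv v z) * Real.exp (-2 * lam * z)
        + (v z) ^ 2 * (-(2 * lam) * Real.exp (-2 * lam * z))))
      = (∫ z in (0:ℝ)..Z, (2 * v z * deriv v z) * Real.exp (-2 * lam * z))
        + ∫ z in (0:ℝ)..Z, (v z) ^ 2 * (-(2 * lam) * Real.exp (-2 * lam * z)) :=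
    intervalIntegral.integral_add hintA hintB
  have hB : (∫ z in (0:ℝ)..Z, (v z) ^ 2 * (-(2 * lam) * Real.exp (-2 * lam * z)))
      = (-(2 * lam)) * ∫ z in (0:ℝ)..Z, (v z) ^ 2 * Real.exp (-2 * lam * z) := by
    rw [← intervalIntegral.integral_const_mul]
    congr 1; ext z; ring
  have hnn : 0 ≤ (∫ z in (0:ℝ)..Z,
      ((2 * v z * deriv v z) * Real.exp (-2 * lam * z)
        + (v z) ^ 2 * (-(2 * lam) * Real.exp (-2 * lam * z)))) := by
    rw [hFTC, hv0]
    have := Real.exp_pos (-2 * lam * Z)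
    nlinarith [sq_nonneg (v Z), Real.exp_pos (-2 * lam * Z)]
  -- 2ab ≤ a² + b² pointwise
  have hmono : (∫ z in (0:ℝ)..Z, (2 * v z * deriv v z) * Real.exp (-2 * lam * z))
      ≤ (∫ z in (0:ℝ)..Z, (v z) ^ 2 * Real.exp (-2 * lam * z))
        + ∫ z in (0:ℝ)..Z, (deriv v z) ^ 2 * Real.exp (-2 * lam * z) := by
    rw [← intervalIntegral.integral_add hintV hintV']
    apply intervalIntegral.integral_mono_on hZ hintA (hintV.add hintV')
    intro z _
    have hEz : 0 ≤ Real.exp (-2 * lam * z) := (Real.exp_pos _).le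
    nlinarith [sq_nonneg (v z - deriv v z), sq_nonneg (v z + deriv v z)]
  have hVnn : 0 ≤ ∫ z in (0:ℝ)..Z, (v z) ^ 2 * Real.exp (-2 * lam * z) := by
    apply intervalIntegral.integral_nonneg hZ
    intro z _
    positivity
  have := hsplit ▸ hnn
  rw [hB] at this
  nlinarith [this, hmono, hVnn]

/-- Coercivity consequence of the Carleman estimate for `d²/dz²` used in the proof of the
strong convexity inequality: for `λ` large enough the Carleman terms absorb the lower-order
term `−C u'²` and dominate a `λ`-independent `H²`-type norm with weight `e^{−2λZ}`. -/
theorem carleman_coercivity (Z C : ℝ) (hZ : 0 < Z) (hC : 0 < C) :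
    ∃ lam₁ C₁ : ℝ, 1 ≤ lam₁ ∧ 0 < C₁ ∧
      ∀ lam : ℝ, lam₁ ≤ lam →
      ∀ u : ℝ → ℝ, ContDiff ℝ 2 u → u 0 = 0 → deriv u 0 = 0 →
      (∫ z in (0:ℝ)..Z,
          ((1/2) * (deriv (deriv u) z) ^ 2 - C * (deriv u z) ^ 2) * Real.exp (-2 * lam * z))
        ≥ C₁ * Real.exp (-2 * lam * Z) *
            ∫ z in (0:ℝ)..Z,
              ((deriv (deriv u) z) ^ 2 + (deriv u z) ^ 2 + (u z) ^ 2) := by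
  refine ⟨max 1 (4 * C), 1/12, le_max_left _ _, by norm_num, ?_⟩
  intro lam hlam u hu hu0 hu'0
  have hlam1 : (1:ℝ) ≤ lam := le_trans (le_max_left _ _) hlam
  have hlam4C : 4 * C ≤ lam := le_trans (le_max_right _ _) hlam
  have hlampos : 0 < lam := lt_of_lt_of_le one_pos hlam1
  have hu1 : ContDiff ℝ 1 (deriv u) := by
    have : ContDiff ℝ ((1:ℕ) + 1) u := by norm_num at hu ⊢; exact hu
    exact (contDiff_succ_iff_deriv.mp this).2.2
  have hucd1 : ContDiff ℝ 1 u := hu.of_le (by norm_num)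
  have hu' : Continuous (deriv u) := hu.continuous_deriv (by norm_num)
  have hu'' : Continuous (deriv (deriv u)) := hu1.continuous_deriv le_rfl
  have huc : Continuous u := hu.continuous
  have hE : Continuous fun z : ℝ => Real.exp (-2 * lam * z) :=
    Real.continuous_exp.comp (continuous_const.mul continuous_id)
  set I2 := ∫ z in (0:ℝ)..Z, (deriv (deriv u) z) ^ 2 * Real.exp (-2 * lam * z) with hI2
  set I1 := ∫ z in (0:ℝ)..Z, (deriv u z) ^ 2 * Real.exp (-2 * lam * z) with hI1
  set I0 := ∫ z in (0:ℝ)..Z, (u z) ^ 2 * Real.exp (-2 * lam * z) with hI0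
  have key1 : lam * I1 ≤ I2 := carleman_poincare lam Z hlam1 hZ.le (deriv u) hu1 hu'0
  have key0 : lam * I0 ≤ I1 := carleman_poincare lam Z hlam1 hZ.le u hucd1 hu0
  have hI1nn : 0 ≤ I1 := intervalIntegral.integral_nonneg hZ.le (fun z _ => by positivity)
  have hI0nn : 0 ≤ I0 := intervalIntegral.integral_nonneg hZ.le (fun z _ => by positivity)
  have hI2nn : 0 ≤ I2 := intervalIntegral.integral_nonneg hZ.le (fun z _ => by positivity)
  have hint2 : IntervalIntegrable
      (fun z => (deriv (deriv u) z) ^ 2 * Real.exp (-2 * lam * z)) MeasureTheory.volume 0 Z :=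
    ((hu''.pow 2).mul hE).intervalIntegrable 0 Z
  have hint1 : IntervalIntegrable
      (fun z => (deriv u z) ^ 2 * Real.exp (-2 * lam * z)) MeasureTheory.volume 0 Z :=
    ((hu'.pow 2).mul hE).intervalIntegrable 0 Z
  have hint0 : IntervalIntegrable
      (fun z => (u z) ^ 2 * Real.exp (-2 * lam * z)) MeasureTheory.volume 0 Z :=
    ((huc.pow 2).mul hE).intervalIntegrable 0 Z
  -- LHS = (1/2) I2 - C I1
  have hLHS : (∫ z in (0:ℝ)..Z,
      ((1/2) * (deriv (deriv u) z) ^ 2 - C * (deriv u z) ^ 2) * Real.exp (-2 * lam * z))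
      = (1/2) * I2 - C * I1 := by
    have : (∫ z in (0:ℝ)..Z,
        ((1/2) * ((deriv (deriv u) z) ^ 2 * Real.exp (-2 * lam * z))
          - C * ((deriv u z) ^ 2 * Real.exp (-2 * lam * z))))
        = (1/2) * I2 - C * I1 := by
      rw [intervalIntegral.integral_sub ((hint2.const_mul _)) ((hint1.const_mul _)),
        intervalIntegral.integral_const_mul, intervalIntegral.integral_const_mul]
    rw [← this]
    congr 1; ext z; ring
  -- weight comparison for the RHS
  have hRHS : Real.exp (-2 * lam * Z) *
      (∫ z in (0:ℝ)..Z, ((deriv (deriv u) z) ^ 2 + (deriv u z) ^ 2 + (u z) ^ 2))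
      ≤ I2 + I1 + I0 := by
    have heq : Real.exp (-2 * lam * Z) *
        (∫ z in (0:ℝ)..Z, ((deriv (deriv u) z) ^ 2 + (deriv u z) ^ 2 + (u z) ^ 2))
        = ∫ z in (0:ℝ)..Z,
            ((deriv (deriv u) z) ^ 2 + (deriv u z) ^ 2 + (u z) ^ 2) * Real.exp (-2 * lam * Z) := by
      rw [← intervalIntegral.integral_const_mul]
      congr 1; ext z; ring
    have hintc : IntervalIntegrable
        (fun z => ((deriv (deriv u) z) ^ 2 + (deriv u z) ^ 2 + (u z) ^ 2) *
          Real.exp (-2 * lam * Z)) MeasureTheory.volume 0 Z :=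
      ((((hu''.pow 2).add (hu'.pow 2)).add (huc.pow 2)).mul continuous_const).intervalIntegrable 0 Z
    have hintsum : IntervalIntegrable
        (fun z => (deriv (deriv u) z) ^ 2 * Real.exp (-2 * lam * z)
          + (deriv u z) ^ 2 * Real.exp (-2 * lam * z)
          + (u z) ^ 2 * Real.exp (-2 * lam * z)) MeasureTheory.volume 0 Z :=
      (hint2.add hint1).add hint0
    have hmono : (∫ z in (0:ℝ)..Z,
        ((deriv (deriv u) z) ^ 2 + (deriv u z) ^ 2 + (u z) ^ 2) * Real.exp (-2 * lam * Z))
        ≤ ∫ z in (0:ℝ)..Z,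
            ((deriv (deriv u) z) ^ 2 * Real.exp (-2 * lam * z)
              + (deriv u z) ^ 2 * Real.exp (-2 * lam * z)
              + (u z) ^ 2 * Real.exp (-2 * lam * z)) := by
      apply intervalIntegral.integral_mono_on hZ.le hintc hintsum
      intro z hz
      have hEE : Real.exp (-2 * lam * Z) ≤ Real.exp (-2 * lam * z) := by
        apply Real.exp_le_exp.mpr
        nlinarith [hz.2]
      have h1 : 0 ≤ (deriv (deriv u) z) ^ 2 + (deriv u z) ^ 2 + (u z) ^ 2 := by positivity
      nlinarith [mul_le_mul_of_nonneg_left hEE h1]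
    have hsum : (∫ z in (0:ℝ)..Z,
        ((deriv (deriv u) z) ^ 2 * Real.exp (-2 * lam * z)
          + (deriv u z) ^ 2 * Real.exp (-2 * lam * z)
          + (u z) ^ 2 * Real.exp (-2 * lam * z))) = I2 + I1 + I0 := by
      rw [intervalIntegral.integral_add (hint2.add hint1) hint0,
        intervalIntegral.integral_add hint2 hint1]
    rw [heq]
    rw [hsum] at hmono
    exact hmono
  rw [ge_iff_le, hLHS]
  -- numeric combination
  have h1 : C * I1 ≤ (1/4) * I2 := by
    have : 4 * C * I1 ≤ lam * I1 := mul_le_mul_of_nonneg_right hlam4C hI1nn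
    nlinarith
  have h2 : I1 ≤ I2 := by nlinarith
  have h3 : I0 ≤ I2 := by nlinarith
  have h4 : Real.exp (-2 * lam * Z) *
      (∫ z in (0:ℝ)..Z, ((deriv (deriv u) z) ^ 2 + (deriv u z) ^ 2 + (u z) ^ 2))
      ≤ 3 * I2 := by linarith
  nlinarith [h4, h1]
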